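/- Let I be a monomial ideal of A with M(I) finite. For every nonzero exponent vector p, one has X^p ∉ I if and only if there exists a truly isolated vertex a ∈ M(I) with p ≤ a componentwise (equivalently, X^p divides X^a). That is, the points of the survival complex are exactly the nontrivial monomial factors of its truly isolated points. -/

import Mathlib

open MvPolynomial

/-- An ideal of `k[X_1,…,X_n]` is a *monomial ideal* if it is generated by a set
of monomials. -/
def IsMonomialIdeal {k : Type*} [Field k] {n : ℕ}
    (I : Ideal (MvPolynomial (Fin n) k)) : Prop :=
  ∃ S : Set ((Fin n) →₀ ℕ),
    I = Ideal.span ((fun a => (monomial a (1 : k) : MvPolynomial (Fin n) k)) '' S)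

/-- `M(I)`: the vertices of the survival complex of `A/I`. -/
def survivors {k : Type*} [Field k] {n : ℕ}
    (I : Ideal (MvPolynomial (Fin n) k)) : Set ((Fin n) →₀ ℕ) :=
  {a | a ≠ 0 ∧ monomial a (1 : k) ∉ I}

/-- A vertex `a ∈ M(I)` is *truly isolated* if `X_i · X^a ∈ I` for every `i`. -/
def TrulyIsolated {k : Type*} [Field k] {n : ℕ}
    (I : Ideal (MvPolynomial (Fin n) k)) (a : (Fin n) →₀ ℕ) : Prop :=
  ∀ i : Fin n, X i * monomial a (1 : k) ∈ I

/-- The points of the survival complex are exactly the nontrivial monomial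
factors of its truly isolated points. -/
theorem survivor_iff_factor_of_truly_isolated
    {k : Type*} [Field k] {n : ℕ} (hn : 1 ≤ n)
    (I : Ideal (MvPolynomial (Fin n) k)) (hI : IsMonomialIdeal I)
    (hfin : (survivors I).Finite)
    (p : (Fin n) →₀ ℕ) (hp : p ≠ 0) :
    monomial p (1 : k) ∉ I ↔
      ∃ a ∈ survivors I, TrulyIsolated I a ∧ ∀ i : Fin n, p i ≤ a i := by
  constructor
  · intro hpI
    -- consider survivors above p
    set S : Set ((Fin n) →₀ ℕ) := {a | a ∈ survivors I ∧ ∀ i, p i ≤ a i} with hS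
    have hSfin : S.Finite := hfin.subset (fun a ha => ha.1)
    have hpS : p ∈ S := ⟨⟨hp, hpI⟩, fun i => le_rfl⟩
    obtain ⟨a, haS, hmax⟩ := Set.Finite.exists_maximalFor
      (fun a => ∑ i : Fin n, a i) S hSfin ⟨p, hpS⟩
    refine ⟨a, haS.1, ?_, haS.2⟩
    intro i
    by_contra hXi
    have heq : X i * monomial a (1 : k) =
        monomial (a + Finsupp.single i 1) (1 : k) := by
      rw [X, monomial_mul, one_mul, add_comm]
    rw [heq] at hXi
    have hmem : a + Finsupp.single i 1 ∈ S := by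
      refine ⟨⟨?_, hXi⟩, fun j => le_trans (haS.2 j) ?_⟩
      · intro h
        have := DFunLike.congr_fun h i
        simp [Finsupp.single_apply] at this
      · simp
    have hsum : (∑ j : Fin n, (a + Finsupp.single i 1 : (Fin n) →₀ ℕ) j)
        = (∑ j : Fin n, a j) + 1 := by
      simp [Finsupp.add_apply, Finset.sum_add_distrib, Finsupp.single_apply]
    have : (∑ j : Fin n, (a + Finsupp.single i 1 : (Fin n) →₀ ℕ) j) ≤ ∑ j : Fin n, a j :=
      hmax hmem (show (∑ j : Fin n, a j) ≤ ∑ j : Fin n, (a + Finsupp.single i 1 : (Fin n) →₀ ℕ) j by omega)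
    omega
  · rintro ⟨a, ⟨-, haI⟩, -, hle⟩
    intro hpI
    apply haI
    have : monomial a (1 : k) = monomial (a - p) (1 : k) * monomial p (1 : k) := by
      rw [monomial_mul, one_mul, tsub_add_cancel_of_le (Finsupp.le_def.mpr hle)]
    rw [this]
    exact Ideal.mul_mem_left _ _ hpI
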